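/- arXiv:1509.01314 — 5 statements merged into one kernel-verified Lean document; each statement's English description precedes it below -/
import Mathlib

section
/- Let v > 0, s > 0, c > 0, and u(b) = (v - b)·f(b)/(f(b) + s) with f(b) = e^{cb} - 1. At any b ∈ (0, v) with u'(b) = 0, one has u''(b) < 0; i.e., every interior critical point of u is a strict local maximum. -/
/-- Auxiliary: explicit first derivative of the utility function. -/
noncomputable def auxPhi (v s c : ℝ) : ℝ → ℝ := fun x =>
  (-(Real.exp (c * x) - 1) * (Real.exp (c * x) - 1 + s)
    + (v - x) * c * Real.exp (c * x) * s) / (Real.exp (c * x) - 1 + s) ^ 2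

lemma auxExp (c x : ℝ) : HasDerivAt (fun y => Real.exp (c * y)) (Real.exp (c * x) * c) x := by
  simpa using ((hasDerivAt_id x).const_mul c).exp

lemma auxDpos (s c x : ℝ) (hs : 0 < s) (hc : 0 < c) (hx : 0 < x) :
    0 < Real.exp (c * x) - 1 + s := by
  nlinarith [Real.add_one_le_exp (c * x), mul_pos hc hx]

lemma auxHasDeriv (v s c x : ℝ) (hs : 0 < s) (hc : 0 < c) (hx : 0 < x) :
    HasDerivAt (fun y => (v - y) * (Real.exp (c * y) - 1) / (Real.exp (c * y) - 1 + s))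
      (auxPhi v s c x) x := by
  have hd := auxDpos s c x hs hc hx
  have hN : HasDerivAt (fun y => (v - y) * (Real.exp (c * y) - 1))
      ((-1) * (Real.exp (c * x) - 1) + (v - x) * (Real.exp (c * x) * c)) x :=
    ((hasDerivAt_id x).const_sub v).mul ((auxExp c x).sub_const 1)
  have hDen : HasDerivAt (fun y => Real.exp (c * y) - 1 + s) (Real.exp (c * x) * c) x :=
    ((auxExp c x).sub_const 1).add_const s
  have h := hN.div hDen hd.ne'
  refine h.congr_deriv ?_
  unfold auxPhi
  congr 1
  ring

theorem critical_points_are_maxima (v s c : ℝ) (hv : 0 < v) (hs : 0 < s) (hc : 0 < c)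
    (f : ℝ → ℝ) (hf : ∀ b, f b = Real.exp (c * b) - 1)
    (u : ℝ → ℝ) (hu : ∀ b, u b = (v - b) * f b / (f b + s))
    (b : ℝ) (hb : b ∈ Set.Ioo 0 v) (hcrit : deriv u b = 0) :
    deriv (deriv u) b < 0 := by
  obtain ⟨hb0, hbv⟩ := hb
  have hueq : u = fun x => (v - x) * (Real.exp (c * x) - 1) / (Real.exp (c * x) - 1 + s) := by
    funext x; rw [hu, hf]
  subst hueq
  have hd := auxDpos s c b hs hc hb0
  have hev : deriv (fun x => (v - x) * (Real.exp (c * x) - 1) / (Real.exp (c * x) - 1 + s))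
      =ᶠ[nhds b] auxPhi v s c := by
    filter_upwards [isOpen_Ioi.mem_nhds (Set.mem_Ioi.mpr hb0)] with x hx
    exact (auxHasDeriv v s c x hs hc hx).deriv
  have h2 : deriv (deriv (fun x => (v - x) * (Real.exp (c * x) - 1) / (Real.exp (c * x) - 1 + s))) b
      = deriv (auxPhi v s c) b := hev.deriv_eq
  -- critical point: numerator of auxPhi vanishes at b
  have hφb : auxPhi v s c b = 0 := by
    rw [← (auxHasDeriv v s c b hs hc hb0).deriv]; exact hcrit
  have hNum0 : -(Real.exp (c * b) - 1) * (Real.exp (c * b) - 1 + s)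
      + (v - b) * c * Real.exp (c * b) * s = 0 := by
    unfold auxPhi at hφb
    rcases div_eq_zero_iff.mp hφb with h | h
    · exact h
    · exact absurd h (pow_ne_zero 2 hd.ne')
  have key : (v - b) * c * Real.exp (c * b) * s
      = (Real.exp (c * b) - 1) * (Real.exp (c * b) - 1 + s) := by linarith
  -- second derivative of auxPhi at b
  have hNum : HasDerivAt (fun x => -(Real.exp (c * x) - 1) * (Real.exp (c * x) - 1 + s)
      + (v - x) * c * Real.exp (c * x) * s)
      ((-(Real.exp (c * b) * c)) * (Real.exp (c * b) - 1 + s)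
        + (-(Real.exp (c * b) - 1)) * (Real.exp (c * b) * c)
        + (((-1) * c * Real.exp (c * b) + (v - b) * c * (Real.exp (c * b) * c)) * s)) b := by
    have h1 : HasDerivAt (fun x => -(Real.exp (c * x) - 1)) (-(Real.exp (c * b) * c)) b :=
      ((auxExp c b).sub_const 1).neg
    have h2 : HasDerivAt (fun x => Real.exp (c * x) - 1 + s) (Real.exp (c * b) * c) b :=
      ((auxExp c b).sub_const 1).add_const s
    have h3 : HasDerivAt (fun x => (v - x) * c) ((-1) * c) b :=
      ((hasDerivAt_id b).const_sub v).mul_const c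
    have h4 : HasDerivAt (fun x => (v - x) * c * Real.exp (c * x))
        ((-1) * c * Real.exp (c * b) + (v - b) * c * (Real.exp (c * b) * c)) b :=
      h3.mul (auxExp c b)
    exact (h1.mul h2).add (h4.mul_const s)
  have hDen2 : HasDerivAt (fun x => (Real.exp (c * x) - 1 + s) ^ 2)
      (2 * (Real.exp (c * b) - 1 + s) ^ 1 * (Real.exp (c * b) * c)) b :=
    (((auxExp c b).sub_const 1).add_const s).pow 2
  have hφ' := hNum.div hDen2 (pow_ne_zero 2 hd.ne')
  have hφeq : deriv (auxPhi v s c) b =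
      (((-(Real.exp (c * b) * c)) * (Real.exp (c * b) - 1 + s)
        + (-(Real.exp (c * b) - 1)) * (Real.exp (c * b) * c)
        + (((-1) * c * Real.exp (c * b) + (v - b) * c * (Real.exp (c * b) * c)) * s))
          * (Real.exp (c * b) - 1 + s) ^ 2
        - (-(Real.exp (c * b) - 1) * (Real.exp (c * b) - 1 + s)
            + (v - b) * c * Real.exp (c * b) * s)
          * (2 * (Real.exp (c * b) - 1 + s) ^ 1 * (Real.exp (c * b) * c)))
        / ((Real.exp (c * b) - 1 + s) ^ 2) ^ 2 := by
    have : auxPhi v s c = fun x =>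
        (-(Real.exp (c * x) - 1) * (Real.exp (c * x) - 1 + s)
          + (v - x) * c * Real.exp (c * x) * s) / (Real.exp (c * x) - 1 + s) ^ 2 := rfl
    rw [this]
    exact hφ'.deriv
  rw [h2, hφeq]
  apply div_neg_of_neg_of_pos
  · have hX : ((-(Real.exp (c * b) * c)) * (Real.exp (c * b) - 1 + s)
        + (-(Real.exp (c * b) - 1)) * (Real.exp (c * b) * c)
        + (((-1) * c * Real.exp (c * b) + (v - b) * c * (Real.exp (c * b) * c)) * s))
          * (Real.exp (c * b) - 1 + s) ^ 2
        - (-(Real.exp (c * b) - 1) * (Real.exp (c * b) - 1 + s)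
            + (v - b) * c * Real.exp (c * b) * s)
          * (2 * (Real.exp (c * b) - 1 + s) ^ 1 * (Real.exp (c * b) * c))
        = -(c * (Real.exp (c * b) + 1) * (Real.exp (c * b) - 1 + s) ^ 3) := by
      linear_combination (c * (Real.exp (c * b) - 1 + s) ^ 2
        - 2 * (Real.exp (c * b) - 1 + s) * Real.exp (c * b) * c) * key
    rw [hX]
    have : 0 < c * (Real.exp (c * b) + 1) * (Real.exp (c * b) - 1 + s) ^ 3 := by
      have := Real.exp_pos (c * b)
      positivity
    linarith
  · positivity
end

section
/- Let c > 0, v > 0, s > 0, f(b) = e^{cb} - 1, a(b) = f(b)/(f(b)+s), u(b) = (v-b)·a(b). If b ∈ (0, v) satisfies u'(b) = 0, then b = v - (1/c)·(1 - e^{-cb})·(1/(1 - a(b))). -/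
theorem exp_equilibrium_char (c v s : ℝ) (hc : 0 < c) (hv : 0 < v) (hs : 0 < s)
    (f : ℝ → ℝ) (hf : ∀ b, f b = Real.exp (c * b) - 1)
    (a : ℝ → ℝ) (ha : ∀ b, a b = f b / (f b + s))
    (u : ℝ → ℝ) (hu : ∀ b, u b = (v - b) * a b)
    (b : ℝ) (hb : b ∈ Set.Ioo 0 v) (hcrit : deriv u b = 0) :
    b = v - (1 / c) * (1 - Real.exp (-(c * b))) * (1 / (1 - a b)) := by
  obtain ⟨hb0, hbv⟩ := hb
  have hE1 : 1 < Real.exp (c * b) := by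
    rw [show (1:ℝ) = Real.exp 0 by simp]
    exact Real.exp_lt_exp.mpr (by positivity)
  set E := Real.exp (c * b) with hEdef
  have hEpos : 0 < E := Real.exp_pos _
  have hD : 0 < E - 1 + s := by linarith
  have hfun : u = fun x => (v - x) * ((Real.exp (c*x) - 1) / (Real.exp (c*x) - 1 + s)) := by
    funext x; rw [hu, ha, hf]
  have hd1 : HasDerivAt (fun x => Real.exp (c*x)) (c*E) b := by
    exact ((Real.hasDerivAt_exp (c*b)).comp b ((hasDerivAt_id b).const_mul c)).congr_deriv (by rw [hEdef]; ring)
  have hnum : HasDerivAt (fun x => Real.exp (c*x) - 1) (c*E) b := hd1.sub_const 1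
  have hden : HasDerivAt (fun x => Real.exp (c*x) - 1 + s) (c*E) b := hnum.add_const s
  have hdiv : HasDerivAt (fun x => (Real.exp (c*x) - 1)/(Real.exp (c*x) - 1 + s))
      (((c*E)*(E-1+s) - (E-1)*(c*E))/(E-1+s)^2) b := by
    exact hnum.div hden hD.ne'
  have h1 : HasDerivAt (fun x : ℝ => v - x) (-1) b := (hasDerivAt_id b).const_sub v
  have hprod : HasDerivAt u
      ((-1) * ((E-1)/(E-1+s)) + (v-b) * (((c*E)*(E-1+s) - (E-1)*(c*E))/(E-1+s)^2)) b := by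
    rw [hfun]
    exact h1.mul hdiv
  have heq : (-1) * ((E-1)/(E-1+s)) + (v-b) * (((c*E)*(E-1+s) - (E-1)*(c*E))/(E-1+s)^2) = 0 := by
    rw [← hprod.deriv]; exact hcrit
  have hab : a b = (E - 1) / (E - 1 + s) := by rw [ha, hf]
  have hexpneg : Real.exp (-(c*b)) = E⁻¹ := by rw [Real.exp_neg]
  rw [hab, hexpneg]
  have h1a : 1 - (E - 1) / (E - 1 + s) = s / (E - 1 + s) := by
    field_simp
    ring
  rw [h1a]
  field_simp at heq ⊢
  nlinarith [heq, sq_nonneg (E - 1 + s), mul_pos hEpos hD]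
end

section
/- Let p > 0, v > 0, s > 0, f(b) = b^p, a(b) = f(b)/(f(b)+s), u(b) = (v-b)·a(b). If b ∈ (0, v) satisfies u'(b) = 0, then b = v / (1 + (1/p)·(1/(1 - a(b)))). -/
theorem pow_equilibrium_char (p v s : ℝ) (hp : 0 < p) (hv : 0 < v) (hs : 0 < s)
    (f : ℝ → ℝ) (hf : ∀ b, f b = b ^ p)
    (a : ℝ → ℝ) (ha : ∀ b, a b = f b / (f b + s))
    (u : ℝ → ℝ) (hu : ∀ b, u b = (v - b) * a b)
    (b : ℝ) (hb : b ∈ Set.Ioo 0 v) (hcrit : deriv u b = 0) :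
    b = v / (1 + (1 / p) * (1 / (1 - a b))) := by
  obtain ⟨hb0, hbv⟩ := hb
  have hB : (0:ℝ) < b ^ p := Real.rpow_pos_of_pos hb0 p
  have hD : (0:ℝ) < b ^ p + s := by linarith
  have hc : b ^ (p - 1) * b = b ^ p := by
    rw [← Real.rpow_add_one (ne_of_gt hb0)]; ring_nf
  have hfun : u = fun x => (v - x) * (x ^ p / (x ^ p + s)) := by
    funext x; rw [hu, ha, hf]
  have h1 : HasDerivAt (fun x : ℝ => x ^ p) (p * b ^ (p - 1)) b :=
    Real.hasDerivAt_rpow_const (Or.inl (ne_of_gt hb0))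
  have h2 : HasDerivAt (fun x : ℝ => x ^ p + s) (p * b ^ (p - 1)) b := h1.add_const s
  have h3 : HasDerivAt (fun x : ℝ => x ^ p / (x ^ p + s))
      ((p * b ^ (p - 1) * (b ^ p + s) - b ^ p * (p * b ^ (p - 1))) / (b ^ p + s) ^ 2) b :=
    h1.div h2 (ne_of_gt hD)
  have h4 : HasDerivAt (fun x : ℝ => v - x) (-1) b := by
    simpa using (hasDerivAt_id b).const_sub v
  have h5 := h4.mul h3
  have hderiv : deriv u b =
      (-1) * (b ^ p / (b ^ p + s)) +
        (v - b) * ((p * b ^ (p - 1) * (b ^ p + s) - b ^ p * (p * b ^ (p - 1))) / (b ^ p + s) ^ 2) := by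
    rw [hfun]; exact h5.deriv
  rw [hderiv] at hcrit
  have e1 : (v - b) * (p * b ^ (p - 1) * s) = b ^ p * (b ^ p + s) := by
    field_simp at hcrit
    nlinarith [hcrit]
  have key : (v - b) * (p * s) = b * (b ^ p + s) := by
    have e2 : ((v - b) * (p * s)) * b ^ p = (b * (b ^ p + s)) * b ^ p := by
      linear_combination b * e1 - (v - b) * (p * s) * hc
    exact mul_right_cancel₀ (ne_of_gt hB) e2
  rw [ha, hf]
  have h7 : 1 - b ^ p / (b ^ p + s) = s / (b ^ p + s) := by field_simp; ring
  rw [h7]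
  have hden : 1 + (1 / p) * (1 / (s / (b ^ p + s))) ≠ 0 := by
    have : 0 < 1 / (s / (b ^ p + s)) := by positivity
    have : 0 < (1 / p) * (1 / (s / (b ^ p + s))) := by positivity
    linarith
  rw [eq_div_iff hden]
  field_simp
  nlinarith [key]
end

section
/- Consider n ≥ 2 bidders with values v_1 ≥ v_2 ≥ ... ≥ v_n > 0 and weight f(x) = e^{cx} - 1, c > 0. Suppose w ∈ ℝⁿ with 0 < w_i and w_i ≤ v_i - (1/c)·(1 - e^{-c·w_i})·(1/(1 - a_i(w))) for all i, where a_i(w) = f(w_i)/Σ_j f(w_j). Then for any bid vector b with b_i ≥ w_i for all i, the best response of each bidder i to the others' bids (the unique maximizer of b ↦ (v_i - b)·f(b)/(f(b) + Σ_{j≠i} f(b_j)) on [0, v_i]) is at least w_i. -/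
set_option maxHeartbeats 1000000

theorem best_response_lower_bound (n : ℕ) (hn : 2 ≤ n) (c : ℝ) (hc : 0 < c)
    (v : Fin n → ℝ) (hvpos : ∀ i, 0 < v i)
    (hvsorted : ∀ i j : Fin n, i ≤ j → v j ≤ v i)
    (f : ℝ → ℝ) (hf : ∀ x, f x = Real.exp (c * x) - 1)
    (w : Fin n → ℝ) (hwpos : ∀ i, 0 < w i)
    (hw : ∀ i, w i ≤ v i - (1 / c) * (1 - Real.exp (-(c * w i))) *
        (1 / (1 - f (w i) / ∑ j, f (w j))))
    (b : Fin n → ℝ) (hb : ∀ i, w i ≤ b i) :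
    ∀ i, ∀ β ∈ Set.Icc 0 (v i),
      (∀ x ∈ Set.Icc 0 (v i),
          (v i - x) * f x / (f x + ∑ j ∈ Finset.univ.erase i, f (b j)) ≤
            (v i - β) * f β / (f β + ∑ j ∈ Finset.univ.erase i, f (b j))) →
      w i ≤ β := by
  simp only [hf] at hw ⊢
  intro i β hβ hmax
  by_contra hcon
  push_neg at hcon
  -- hcon : β < w i
  set S : ℝ := ∑ j ∈ Finset.univ.erase i, (Real.exp (c * b j) - 1) with hSdef
  set S' : ℝ := ∑ j ∈ Finset.univ.erase i, (Real.exp (c * w j) - 1) with hS'def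
  set T : ℝ := ∑ j : Fin n, (Real.exp (c * w j) - 1) with hTdef
  have hfwpos : ∀ j : Fin n, (0:ℝ) < Real.exp (c * w j) - 1 := by
    intro j
    have : Real.exp 0 < Real.exp (c * w j) :=
      Real.exp_lt_exp.mpr (mul_pos hc (hwpos j))
    simpa [Real.exp_zero] using this
  have hierase : (Finset.univ.erase i).Nonempty := by
    rw [← Finset.card_pos, Finset.card_erase_of_mem (Finset.mem_univ i),
      Finset.card_univ, Fintype.card_fin]
    omega
  have hS'pos : 0 < S' :=
    Finset.sum_pos (fun j _ => hfwpos j) hierase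
  have hSS' : S' ≤ S := by
    apply Finset.sum_le_sum
    intro j _
    have : Real.exp (c * w j) ≤ Real.exp (c * b j) :=
      Real.exp_le_exp.mpr (by nlinarith [hb j, hc.le])
    linarith
  have hSpos : 0 < S := lt_of_lt_of_le hS'pos hSS'
  set fw : ℝ := Real.exp (c * w i) - 1 with hfwdef
  have hfwipos : 0 < fw := hfwpos i
  have hT : T = S' + fw := by
    rw [hTdef, hS'def, hfwdef, Finset.sum_erase_add _ _ (Finset.mem_univ i)]
  have hTpos : 0 < T := by rw [hT]; linarith
  have hPpos : 0 < 1 - Real.exp (-(c * w i)) := by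
    have : Real.exp (-(c * w i)) < Real.exp 0 :=
      Real.exp_lt_exp.mpr (by nlinarith [hwpos i])
    simpa [Real.exp_zero] using this
  set P : ℝ := 1 - Real.exp (-(c * w i)) with hPdef
  -- rewrite the hw hypothesis
  have hfrac : 1 - fw / T = S' / T := by
    field_simp
    rw [hT]; ring
  have hkey : w i + (1/c) * P * (T / S') ≤ v i := by
    have h := hw i
    rw [hfrac] at h
    have : (1 : ℝ) / (S' / T) = T / S' := by
      rw [one_div_div]
    rw [this] at h
    linarith
  have hXpos : 0 < (1/c) * P * (T / S') :=
    mul_pos (mul_pos (one_div_pos.mpr hc) hPpos) (div_pos hTpos hS'pos)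
  have hwivi : w i ≤ v i := by nlinarith
  -- strict monotonicity of the utility on [0, w i]
  have hmono : StrictMonoOn
      (fun x => (v i - x) * (Real.exp (c * x) - 1) / (Real.exp (c * x) - 1 + S))
      (Set.Icc 0 (w i)) := by
    apply strictMonoOn_of_deriv_pos (convex_Icc 0 (w i))
    · apply ContinuousOn.div
      · fun_prop
      · fun_prop
      · intro x hx
        have : Real.exp 0 ≤ Real.exp (c * x) :=
          Real.exp_le_exp.mpr (by nlinarith [hx.1])
        simp only [Real.exp_zero] at this
        nlinarith
    · intro t ht
      rw [interior_Icc] at ht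
      obtain ⟨ht0, htw⟩ := ht
      set E : ℝ := Real.exp (c * t) with hEdef
      have hEpos : 0 < E := Real.exp_pos _
      have h1E : (1:ℝ) < E := by
        rw [hEdef, ← Real.exp_zero]
        exact Real.exp_lt_exp.mpr (mul_pos hc ht0)
      have hF : (0:ℝ) < E - 1 := by linarith
      have hDpos : 0 < E - 1 + S := by linarith
      have hexp : ∀ s : ℝ, HasDerivAt (fun x => Real.exp (c * x)) (Real.exp (c * s) * c) s := by
        intro s
        simpa [Function.comp_def] using (Real.hasDerivAt_exp (c * s)).comp s ((hasDerivAt_id s).const_mul c)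
      have hN : HasDerivAt (fun x => (v i - x) * (Real.exp (c * x) - 1))
          ((0 - 1) * (E - 1) + (v i - t) * (E * c)) t :=
        ((hasDerivAt_const t (v i)).sub (hasDerivAt_id t)).mul ((hexp t).sub_const 1)
      have hD : HasDerivAt (fun x => Real.exp (c * x) - 1 + S) (E * c) t :=
        ((hexp t).sub_const 1).add_const S
      have hU := hN.div hD (ne_of_gt hDpos)
      rw [show (fun x => (v i - x) * (Real.exp (c * x) - 1) / (Real.exp (c * x) - 1 + S)) = ((fun x => (v i - x) * (Real.exp (c * x) - 1)) / fun x => Real.exp (c * x) - 1 + S) from rfl, hU.deriv]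
      apply div_pos
      · -- numerator positivity
        have hFfw : E - 1 ≤ fw := by
          have : Real.exp (c * t) ≤ Real.exp (c * w i) :=
            Real.exp_le_exp.mpr (by nlinarith [htw.le])
          rw [hfwdef]; linarith
        have hi : E - 1 ≤ P * E := by
          have he : Real.exp (-(c * w i)) * E = Real.exp (c * t - c * w i) := by
            rw [hEdef, ← Real.exp_add]; ring_nf
          have hle : Real.exp (c * t - c * w i) ≤ 1 := by
            rw [← Real.exp_zero]
            exact Real.exp_le_exp.mpr (by nlinarith [htw.le])
          have : P * E = E - Real.exp (c * t - c * w i) := by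
            rw [hPdef, ← he]; ring
          linarith
        have hii : (E - 1 + S) * S' ≤ S * T := by
            rw [hT]
            nlinarith [hFfw, hSS', hF.le, hS'pos.le, hfwipos.le]
        have hchain : (E - 1) * (E - 1 + S) ≤ ((1/c) * P * (T / S')) * (c * E * S) := by
          have heq : ((1/c) * P * (T / S')) * (c * E * S) = (P * E) * (S * T) / S' := by
            field_simp
          rw [heq, le_div_iff₀ hS'pos]
          calc (E - 1) * (E - 1 + S) * S' = (E - 1) * ((E - 1 + S) * S') := by ring
            _ ≤ (P * E) * ((E - 1 + S) * S') := by
                exact mul_le_mul_of_nonneg_right hi (mul_nonneg hDpos.le hS'pos.le)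
            _ ≤ (P * E) * (S * T) := by
                exact mul_le_mul_of_nonneg_left hii (mul_nonneg hPpos.le hEpos.le)
        have hvt : (1/c) * P * (T / S') < v i - t := by linarith [hkey, htw]
        have hcES : 0 < c * E * S := mul_pos (mul_pos hc hEpos) hSpos
        nlinarith [mul_lt_mul_of_pos_right hvt hcES]
      · exact pow_pos hDpos 2
  have h1 := hmax (w i) ⟨(hwpos i).le, hwivi⟩
  have h2 := hmono ⟨hβ.1, hcon.le⟩ ⟨(hwpos i).le, le_refl _⟩ hcon
  simp only at h1 h2
  linarith
end

section
/- Consider n ≥ 2 bidders with values v_1 ≥ ... ≥ v_n > 2/c, weight f(x) = e^{cx} - 1, c > 0. Then there exists a pure-strategy Nash equilibrium bid vector b* with b*_i ≥ v_{max(i,2)} - 2/c for all i, i.e., b*_1 ≥ v_2 - 2/c and b*_i ≥ v_i - 2/c for i ≥ 2, and b*_i ≤ v_i for all i. -/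
noncomputable def psiAux (c V S x : ℝ) : ℝ :=
  (1 - Real.exp (-(c*x))) * (Real.exp (c*x) - 1 + S) / (c * (V - x))

noncomputable def uAux (c V S x : ℝ) : ℝ :=
  (V - x) * (Real.exp (c*x) - 1) / (Real.exp (c*x) - 1 + S)

lemma psi_strictMonoOn (c V S : ℝ) (hc : 0 < c) (hS : 0 < S) :
    StrictMonoOn (psiAux c V S) (Set.Ico 0 V) := by
  intro x hx y hy hxy
  obtain ⟨hx0, hxV⟩ := hx
  obtain ⟨hy0, hyV⟩ := hy
  have hEx : Real.exp (c*x) ≥ 1 := Real.one_le_exp (by positivity)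
  have hExy : Real.exp (c*x) < Real.exp (c*y) := by
    apply Real.exp_lt_exp.2; nlinarith
  have hixy : Real.exp (-(c*y)) < Real.exp (-(c*x)) := by
    apply Real.exp_lt_exp.2; nlinarith
  have hix1 : Real.exp (-(c*x)) ≤ 1 := by
    rw [Real.exp_le_one_iff]; nlinarith
  have hiypos : 0 < Real.exp (-(c*y)) := Real.exp_pos _
  have hdx : 0 < c * (V - x) := by nlinarith
  have hdy : 0 < c * (V - y) := by nlinarith
  unfold psiAux
  rw [div_lt_div_iff₀ hdx hdy]
  set Ex := Real.exp (c*x)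
  set Ey := Real.exp (c*y)
  set ix := Real.exp (-(c*x))
  set iy := Real.exp (-(c*y))
  have h1 : (ix - iy) * ((Ex - 1 + S) * (c * (V - y))) ≥ 0 := by
    exact mul_nonneg (by linarith) (mul_nonneg (by linarith) hdy.le)
  have h2 : (1 - iy) * ((Ey - 1 + S) * (c * (V - x)) - (Ex - 1 + S) * (c * (V - y))) > 0 := by
    apply mul_pos (by linarith)
    have : (Ex - 1 + S) * (c * (V - y)) < (Ey - 1 + S) * (c * (V - x)) := by
      apply mul_lt_mul' (by linarith) (by nlinarith) (le_of_lt hdy) (by linarith)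
    linarith
  nlinarith [h1, h2]

lemma psi_continuousOn (c V S : ℝ) (hc : 0 < c) :
    ContinuousOn (psiAux c V S) (Set.Iio V) := by
  unfold psiAux
  apply ContinuousOn.div (by fun_prop) (by fun_prop)
  intro x hx
  have : 0 < c * (V - x) := mul_pos hc (by simpa [sub_pos] using hx)
  exact ne_of_gt this

lemma psi_exists_eq (c V S : ℝ) (hc : 0 < c) (hS : 0 < S) (hV : 0 < V) :
    ∃ x ∈ Set.Ioo 0 V, psiAux c V S x = S := by
  set A := 1 - Real.exp (-(c*(V/2))) with hA
  have hApos : 0 < A := by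
    have : Real.exp (-(c*(V/2))) < 1 := by
      rw [Real.exp_lt_one_iff]; nlinarith
    simp only [hA]; linarith
  set δ := min (V/2) (A/c) with hδ
  have hδpos : 0 < δ := lt_min (by linarith) (by positivity)
  set x₁ := V - δ with hx₁
  have hx₁half : V/2 ≤ x₁ := by
    have : δ ≤ V/2 := min_le_left _ _
    simp only [hx₁]; linarith
  have hx₁V : x₁ < V := by simp only [hx₁]; linarith
  have hx₁pos : 0 < x₁ := by linarith
  have hpsi0 : psiAux c V S 0 = 0 := by simp [psiAux]
  have hpsi1 : S ≤ psiAux c V S x₁ := by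
    have hcδA : c * δ ≤ A := by
      have : δ ≤ A/c := min_le_right _ _
      rw [mul_comm]
      exact (le_div_iff₀ hc).1 this
    have h1 : A ≤ 1 - Real.exp (-(c*x₁)) := by
      have : Real.exp (-(c*x₁)) ≤ Real.exp (-(c*(V/2))) := by
        apply Real.exp_le_exp.2; nlinarith
      simp only [hA]; linarith
    have h2 : S ≤ Real.exp (c*x₁) - 1 + S := by
      have : (1:ℝ) ≤ Real.exp (c*x₁) := Real.one_le_exp (by positivity)
      linarith
    have hden : c * (V - x₁) = c * δ := by rw [hx₁]; ring_nf
    unfold psiAux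
    rw [hden, ge_iff_le.symm, ge_iff_le, le_div_iff₀ (by positivity)]
    calc S * (c * δ) ≤ S * A := by nlinarith
      _ ≤ (1 - Real.exp (-(c*x₁))) * (Real.exp (c*x₁) - 1 + S) := by nlinarith
  have hcont : ContinuousOn (psiAux c V S) (Set.Icc 0 x₁) :=
    (psi_continuousOn c V S hc).mono (fun y hy => lt_of_le_of_lt hy.2 hx₁V)
  have hmem : S ∈ Set.Icc (psiAux c V S 0) (psiAux c V S x₁) := by
    rw [hpsi0]; exact ⟨hS.le, hpsi1⟩
  obtain ⟨x, hx, hxeq⟩ := intermediate_value_Icc (le_of_lt hx₁pos) hcont hmem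
  refine ⟨x, ⟨?_, lt_of_le_of_lt hx.2 hx₁V⟩, hxeq⟩
  rcases eq_or_lt_of_le hx.1 with h | h
  · exfalso; rw [← h] at hxeq; rw [hpsi0] at hxeq; linarith
  · exact h

open Classical in
noncomputable def brAux (c V S : ℝ) : ℝ :=
  if h : ∃ x ∈ Set.Ioo 0 V, psiAux c V S x = S then h.choose else 0

lemma brAux_spec (c V S : ℝ) (hc : 0 < c) (hS : 0 < S) (hV : 0 < V) :
    brAux c V S ∈ Set.Ioo 0 V ∧ psiAux c V S (brAux c V S) = S := by
  have h := psi_exists_eq c V S hc hS hV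
  rw [brAux, dif_pos h]
  exact h.choose_spec

lemma brAux_mono (c V S S' : ℝ) (hc : 0 < c) (hS : 0 < S) (hSS' : S ≤ S') (hV : 0 < V) :
    brAux c V S ≤ brAux c V S' := by
  obtain ⟨ha, hpa⟩ := brAux_spec c V S hc hS hV
  obtain ⟨ha', hpa'⟩ := brAux_spec c V S' hc (lt_of_lt_of_le hS hSS') hV
  set a := brAux c V S
  set a' := brAux c V S'
  by_contra hcon
  push_neg at hcon
  have hkey : psiAux c V S' a ≤ S' := by
    have hden : (0:ℝ) < c * (V - a) := mul_pos hc (by linarith [ha.2])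
    have hE1 : (1:ℝ) ≤ Real.exp (c*a) := Real.one_le_exp (by nlinarith [ha.1])
    have hI1 : Real.exp (-(c*a)) ≤ 1 := by
      rw [Real.exp_le_one_iff]; nlinarith [ha.1]
    have heq : (1 - Real.exp (-(c*a))) * (Real.exp (c*a) - 1 + S) = c * (V - a) * S := by
      have := hpa
      rw [psiAux, div_eq_iff (ne_of_gt hden)] at this
      linarith
    have h1I : 1 - Real.exp (-(c*a)) ≤ c * (V - a) := by nlinarith
    rw [psiAux, div_le_iff₀ hden]
    nlinarith
  have := psi_strictMonoOn c V S' hc (lt_of_lt_of_le hS hSS')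
    ⟨ha'.1.le, ha'.2⟩ ⟨ha.1.le, ha.2⟩ hcon
  rw [hpa'] at this
  linarith

lemma brAux_lb (c V S t : ℝ) (hc : 0 < c) (hS : 0 < S) (ht0 : 0 < t) (htV : t < V)
    (hgap : 2 ≤ c * (V - t)) (hft : Real.exp (c*t) - 1 ≤ S) :
    t ≤ brAux c V S := by
  have hV : 0 < V := lt_trans ht0 htV
  obtain ⟨ha, hpa⟩ := brAux_spec c V S hc hS hV
  by_contra hcon
  push_neg at hcon
  have hpsit : psiAux c V S t ≤ S := by
    have hden : (0:ℝ) < c * (V - t) := by linarith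
    have hE1 : (1:ℝ) ≤ Real.exp (c*t) := Real.one_le_exp (by positivity)
    have hIE : Real.exp (-(c*t)) * Real.exp (c*t) = 1 := by
      rw [← Real.exp_add]; ring_nf; exact Real.exp_zero
    have hIpos : (0:ℝ) < Real.exp (-(c*t)) := Real.exp_pos _
    rw [psiAux, div_le_iff₀ hden]
    -- (1-I)(E-1+S) ≤ c(V-t) S ; note (1-I)*E = E-1
    nlinarith [mul_pos hIpos (Real.exp_pos (c*t)), sq_nonneg (Real.exp (c*t) - 1 - S),
      mul_le_mul_of_nonneg_left hft (sub_nonneg.2 (by nlinarith : Real.exp (-(c*t)) ≤ 1))]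
  have := psi_strictMonoOn c V S hc hS ⟨ha.1.le, ha.2⟩ ⟨ht0.le, htV⟩ hcon
  rw [hpa] at this
  linarith

lemma uAux_hasDerivAt (c V S x : ℝ) (hc : 0 < c) (hS : 0 < S) (hx : 0 ≤ x) :
    HasDerivAt (uAux c V S)
      (((-(Real.exp (c*x) - 1) + (V - x) * (c * Real.exp (c*x))) * (Real.exp (c*x) - 1 + S)
        - (V - x) * (Real.exp (c*x) - 1) * (c * Real.exp (c*x)))
        / (Real.exp (c*x) - 1 + S)^2) x := by
  have hE : HasDerivAt (fun y => Real.exp (c*y)) (c * Real.exp (c*x)) x := by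
    have h1 : HasDerivAt (fun y : ℝ => c*y) c x := by
      simpa using (hasDerivAt_id x).const_mul c
    exact ((Real.hasDerivAt_exp (c*x)).comp x h1).congr_deriv (by ring)
  have hN : HasDerivAt (fun y => (V - y) * (Real.exp (c*y) - 1))
      (-(Real.exp (c*x) - 1) + (V - x) * (c * Real.exp (c*x))) x := by
    have h2 : HasDerivAt (fun y : ℝ => V - y) (-1) x := by
      simpa using (hasDerivAt_id x).const_sub V
    have h3 : HasDerivAt (fun y => Real.exp (c*y) - 1) (c * Real.exp (c*x)) x :=
      hE.sub_const 1
    have := h2.mul h3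
    exact this.congr_deriv (by ring)
  have hD : HasDerivAt (fun y => Real.exp (c*y) - 1 + S) (c * Real.exp (c*x)) x :=
    (hE.sub_const 1).add_const S
  have hDne : Real.exp (c*x) - 1 + S ≠ 0 := by
    have : (1:ℝ) ≤ Real.exp (c*x) := Real.one_le_exp (by positivity)
    linarith
  exact hN.div hD hDne

lemma uAux_continuousOn (c V S : ℝ) (hc : 0 < c) (hS : 0 < S) :
    ContinuousOn (uAux c V S) (Set.Ici 0) := by
  unfold uAux
  apply ContinuousOn.div (by fun_prop) (by fun_prop)
  intro x hx
  simp only [Set.mem_Ici] at hx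
  have : (1:ℝ) ≤ Real.exp (c*x) := Real.one_le_exp (by positivity)
  nlinarith

lemma uAux_isMax (c V S b : ℝ) (hc : 0 < c) (hS : 0 < S)
    (hb : b ∈ Set.Ioo 0 V) (hpsi : psiAux c V S b = S) :
    ∀ y ∈ Set.Icc 0 V, uAux c V S y ≤ uAux c V S b := by
  obtain ⟨hb0, hbV⟩ := hb
  -- sign of derivative in terms of psi
  have hsign : ∀ x, 0 < x → x < V →
      ((psiAux c V S x ≤ S → 0 ≤ deriv (uAux c V S) x) ∧
       (S ≤ psiAux c V S x → deriv (uAux c V S) x ≤ 0)) := by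
    intro x hx0 hxV
    have hd := (uAux_hasDerivAt c V S x hc hS hx0.le).deriv
    rw [hd]
    have hE1 : (1:ℝ) ≤ Real.exp (c*x) := Real.one_le_exp (by positivity)
    have hEpos : (0:ℝ) < Real.exp (c*x) := Real.exp_pos _
    have hix : Real.exp (-(c*x)) * Real.exp (c*x) = 1 := by
      rw [← Real.exp_add]; ring_nf; exact Real.exp_zero
    have hixpos : (0:ℝ) < Real.exp (-(c*x)) := Real.exp_pos _
    have hdenpos : (0:ℝ) < c * (V - x) := mul_pos hc (by linarith)
    have hDpos : (0:ℝ) < Real.exp (c*x) - 1 + S := by linarith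
    have hsq : (0:ℝ) < (Real.exp (c*x) - 1 + S)^2 := by positivity
    set E := Real.exp (c*x) with hEdef
    set I := Real.exp (-(c*x)) with hIdef
    have hpsix : psiAux c V S x = (1 - I) * (E - 1 + S) / (c * (V - x)) := rfl
    constructor
    · intro hle
      rw [hpsix, div_le_iff₀ hdenpos] at hle
      apply div_nonneg _ hsq.le
      nlinarith [mul_le_mul_of_nonneg_left hle hEpos.le]
    · intro hge
      rw [hpsix, le_div_iff₀ hdenpos] at hge
      apply div_nonpos_of_nonpos_of_nonneg _ hsq.le
      nlinarith [mul_le_mul_of_nonneg_left hge hEpos.le]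
  have hmono : MonotoneOn (uAux c V S) (Set.Icc 0 b) := by
    apply monotoneOn_of_deriv_nonneg (convex_Icc 0 b)
      ((uAux_continuousOn c V S hc hS).mono (fun y hy => hy.1))
    · intro x hx
      rw [interior_Icc] at hx
      exact ((uAux_hasDerivAt c V S x hc hS hx.1.le).differentiableAt).differentiableWithinAt
    · intro x hx
      rw [interior_Icc] at hx
      refine (hsign x hx.1 (lt_trans hx.2 hbV)).1 ?_
      have := psi_strictMonoOn c V S hc hS ⟨hx.1.le, lt_trans hx.2 hbV⟩ ⟨hb0.le, hbV⟩ hx.2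
      linarith [hpsi ▸ this]
  have hanti : AntitoneOn (uAux c V S) (Set.Icc b V) := by
    apply antitoneOn_of_deriv_nonpos (convex_Icc b V)
      ((uAux_continuousOn c V S hc hS).mono (fun y hy => le_trans hb0.le hy.1))
    · intro x hx
      rw [interior_Icc] at hx
      exact ((uAux_hasDerivAt c V S x hc hS (le_trans hb0.le hx.1.le)).differentiableAt).differentiableWithinAt
    · intro x hx
      rw [interior_Icc] at hx
      refine (hsign x (lt_trans hb0 hx.1) hx.2).2 ?_
      have := psi_strictMonoOn c V S hc hS ⟨hb0.le, hbV⟩ ⟨(lt_trans hb0 hx.1).le, hx.2⟩ hx.1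
      linarith [hpsi ▸ this]
  intro y hy
  rcases le_total y b with h | h
  · exact hmono ⟨hy.1, h⟩ ⟨hb0.le, le_refl b⟩ h
  · exact hanti ⟨le_refl b, hbV.le⟩ ⟨h, hy.2⟩ h

theorem exists_equilibrium_with_bounds (n : ℕ) (hn : 2 ≤ n) (c : ℝ) (hc : 0 < c)
    (v : Fin n → ℝ) (hvsorted : ∀ i j : Fin n, i ≤ j → v j ≤ v i)
    (hvbig : ∀ i, 2 / c < v i)
    (f : ℝ → ℝ) (hf : ∀ x, f x = Real.exp (c * x) - 1) :
    ∃ b : Fin n → ℝ,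
      (b ⟨0, by omega⟩ ≥ v ⟨1, by omega⟩ - 2 / c) ∧
      (∀ i : Fin n, i ≠ ⟨0, by omega⟩ → b i ≥ v i - 2 / c) ∧
      (∀ i, b i ≤ v i) ∧
      (∀ i, ∀ x ∈ Set.Icc 0 (v i),
        (v i - x) * f x / (f x + ∑ j ∈ Finset.univ.erase i, f (b j)) ≤
          (v i - b i) * f (b i) / (f (b i) + ∑ j ∈ Finset.univ.erase i, f (b j))) := by
  have h2c : 0 < 2 / c := by positivity
  set i0 : Fin n := ⟨0, by omega⟩ with hi0
  set i1 : Fin n := ⟨1, by omega⟩ with hi1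
  set l : Fin n → ℝ := fun i => (if i = i0 then v i1 else v i) - 2 / c with hl
  have hlpos : ∀ i, 0 < l i := by
    intro i
    simp only [hl]
    split <;> linarith [hvbig i1, hvbig i]
  have hlub : ∀ i, l i ≤ v i - 2 / c := by
    intro i
    simp only [hl]
    split
    · rename_i h; rw [h]; have := hvsorted i0 i1 (by simp [hi0, hi1, Fin.le_def]); linarith
    · exact le_refl _
  have hlanchor : ∀ i, l i ≤ v i1 - 2 / c := by
    intro i
    simp only [hl]
    split
    · exact le_refl _
    · rename_i h
      have : i1 ≤ i := by
        rw [Fin.le_def]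
        simp only [hi1]
        have : i.val ≠ 0 := fun hh => h (Fin.ext hh)
        omega
      linarith [hvsorted i1 i this]
  have hlv : ∀ i, l i ≤ v i := fun i => le_trans (hlub i) (by linarith)
  have hlltv : ∀ i, l i < v i := fun i => lt_of_le_of_lt (hlub i) (by linarith)
  -- the anchor index
  have hanchor : ∀ i : Fin n, ∃ j0 : Fin n, j0 ≠ i ∧ l j0 = v i1 - 2 / c := by
    intro i
    by_cases h : i = i0
    · refine ⟨i1, ?_, ?_⟩
      · rw [h]; simp [hi0, hi1, Fin.ext_iff]
      · simp only [hl]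
        rw [if_neg (by simp [hi0, hi1, Fin.ext_iff])]
    · exact ⟨i0, fun hh => h (hh ▸ rfl), by simp [hl]⟩
  -- complete lattice on the box
  haveI instF : ∀ i : Fin n, Fact (l i ≤ v i) := fun i => ⟨hlv i⟩
  set K := ∀ i : Fin n, Set.Icc (l i) (v i) with hK
  set Ssum : (Fin n → ℝ) → Fin n → ℝ :=
    fun b i => ∑ j ∈ Finset.univ.erase i, (Real.exp (c * b j) - 1) with hSsum
  -- positivity of Ssum on the box, and the lower bound f(l i) ≤ Ssum
  have hSkey : ∀ (b : Fin n → ℝ), (∀ j, l j ≤ b j) → ∀ i,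
      Real.exp (c * l i) - 1 ≤ Ssum b i ∧ 0 < Ssum b i := by
    intro b hb i
    obtain ⟨j0, hj0ne, hj0l⟩ := hanchor i
    have hterm : ∀ j ∈ Finset.univ.erase i, 0 ≤ Real.exp (c * b j) - 1 := by
      intro j _
      have hlj := hlpos j
      have hbj := hb j
      have : (1:ℝ) ≤ Real.exp (c * b j) := Real.one_le_exp (by nlinarith)
      linarith
    have hj0mem : j0 ∈ Finset.univ.erase i := Finset.mem_erase.2 ⟨hj0ne, Finset.mem_univ _⟩
    have hsingle : Real.exp (c * b j0) - 1 ≤ Ssum b i :=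
      Finset.single_le_sum hterm hj0mem
    have hbl : l j0 ≤ b j0 := hb j0
    have hli : l i ≤ l j0 := by rw [hj0l]; exact hlanchor i
    have hmono : Real.exp (c * l i) - 1 ≤ Real.exp (c * b j0) - 1 := by
      have : c * l i ≤ c * b j0 := by nlinarith
      simpa using Real.exp_le_exp.2 this
    have hpos : 0 < Real.exp (c * l j0) - 1 := by
      have h1 : 0 < c * l j0 := mul_pos hc (hlpos j0)
      nlinarith [Real.add_one_le_exp (c * l j0)]
    constructor
    · linarith
    · have : Real.exp (c * l j0) - 1 ≤ Real.exp (c * b j0) - 1 := by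
        have : c * l j0 ≤ c * b j0 := by nlinarith
        simpa using Real.exp_le_exp.2 this
      linarith
  -- the best-response map
  set T : K → K := fun b => fun i =>
    ⟨brAux c (v i) (Ssum (fun j => (b j : ℝ)) i), by
      have hb : ∀ j, l j ≤ ((b j : ℝ)) := fun j => (b j).2.1
      obtain ⟨hfli, hSpos⟩ := hSkey (fun j => (b j : ℝ)) hb i
      have hVpos : 0 < v i := lt_trans (hlpos i) (hlltv i)
      obtain ⟨hmem, _⟩ := brAux_spec c (v i) _ hc hSpos hVpos
      constructor
      · apply brAux_lb c (v i) _ (l i) hc hSpos (hlpos i) (hlltv i)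
        · have := hlub i
          have h1 : 2 / c ≤ v i - l i := by linarith
          calc (2:ℝ) = c * (2 / c) := by field_simp
            _ ≤ c * (v i - l i) := by nlinarith
        · exact hfli
      · exact hmem.2.le⟩ with hT
  have hTmono : Monotone T := by
    intro b b' hbb i
    simp only [hT, Subtype.mk_le_mk]
    refine brAux_mono _ _ _ _ hc
      ((hSkey (fun j => ((b j : ℝ))) (fun j => (b j).2.1) i).2) ?_
      (lt_trans (hlpos i) (hlltv i))
    apply Finset.sum_le_sum
    intro j _
    have h1 : (b j : ℝ) ≤ (b' j : ℝ) := hbb j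
    simp only [sub_le_sub_iff_right]
    exact Real.exp_le_exp.2 (by nlinarith)
  -- fixed point
  set Thom : K →o K := ⟨T, hTmono⟩ with hThom
  set bfix : K := Thom.lfp with hbfix
  have hfix : T bfix = bfix := Thom.map_lfp
  set b : Fin n → ℝ := fun i => (bfix i : ℝ) with hb
  have hfixi : ∀ i, b i = brAux c (v i) (Ssum b i) := by
    intro i
    conv_lhs => rw [hb, ← hfix]
  have hbmem : ∀ i, l i ≤ b i ∧ b i ≤ v i := fun i => (bfix i).2
  refine ⟨b, ?_, ?_, ?_, ?_⟩
  · have := (hbmem i0).1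
    simp only [hl, if_pos rfl] at this
    exact this
  · intro i hi
    have := (hbmem i).1
    simp only [hl, if_neg hi] at this
    exact this
  · exact fun i => (hbmem i).2
  · intro i x hx
    have hSpos := (hSkey b (fun j => (hbmem j).1) i).2
    have hVpos : 0 < v i := lt_trans (hlpos i) (hlltv i)
    obtain ⟨hmem, hpsi⟩ := brAux_spec c (v i) (Ssum b i) hc hSpos hVpos
    have hmax := uAux_isMax c (v i) (Ssum b i) _ hc hSpos hmem hpsi x hx
    rw [← hfixi i] at hmax
    simp only [hf]
    simpa [uAux, hSsum] using hmax
end
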